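/- Let λ > 0, β ∈ ℝ, κ ∈ ℝ with κ ≠ 1. Define c(t) = (1/β + (1/λ - 1/β)·exp(-(κ-1)βt))⁻¹ if β ≠ 0, and c(t) = ((κ-1)t + 1/λ)⁻¹ if β = 0. Then on any interval where c is defined and positive, c satisfies the functional equation c(t)·exp((κ-1)·∫₀ᵗ c(s) ds) = λ·exp(β(κ-1)t). -/

import Mathlib

theorem stmt0 (lam β κ : ℝ) (hlam : 0 < lam) (hκ : κ ≠ 1)
    (c : ℝ → ℝ)
    (hc : c = fun t => if β = 0 then ((κ-1)*t + 1/lam)⁻¹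
          else (1/β + (1/lam - 1/β) * Real.exp (-(κ-1)*β*t))⁻¹) :
    ∀ t : ℝ, 0 ≤ t → (∀ s ∈ Set.Icc (0:ℝ) t, 0 < c s) →
      c t * Real.exp ((κ-1) * ∫ s in (0:ℝ)..t, c s) = lam * Real.exp (β*(κ-1)*t) := by
  intro t ht hpos
  subst hc
  have ha0 : κ - 1 ≠ 0 := sub_ne_zero.mpr hκ
  by_cases hβ : β = 0
  · subst hβ
    simp only [reduceIte] at hpos ⊢
    have hposd : ∀ s ∈ Set.Icc (0:ℝ) t, 0 < (κ-1)*s + 1/lam := by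
      intro s hs
      have := hpos s hs
      exact inv_pos.mp this
    have hderiv : ∀ s ∈ Set.uIcc (0:ℝ) t,
        HasDerivAt (fun s => (κ-1)⁻¹ * Real.log ((κ-1)*s + 1/lam)) (((κ-1)*s+1/lam)⁻¹) s := by
      intro s hs
      rw [Set.uIcc_of_le ht] at hs
      have hne : (κ-1)*s + 1/lam ≠ 0 := (hposd s hs).ne'
      have h1 : HasDerivAt (fun s => (κ-1)*s + 1/lam) (κ-1) s := by
        simpa using ((hasDerivAt_id s).const_mul (κ-1)).add_const (1/lam)
      have h2 := (h1.log hne).const_mul ((κ-1)⁻¹)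
      refine h2.congr_deriv ?_
      field_simp
    have hcont : IntervalIntegrable (fun s => ((κ-1)*s+1/lam)⁻¹) MeasureTheory.volume 0 t := by
      apply ContinuousOn.intervalIntegrable
      rw [Set.uIcc_of_le ht]
      exact ((continuous_const.mul continuous_id).add continuous_const).continuousOn.inv₀
        (fun s hs => (hposd s hs).ne')
    have hint := intervalIntegral.integral_eq_sub_of_hasDerivAt hderiv hcont
    rw [hint]
    have h0 : (κ-1)*(0:ℝ) + 1/lam = 1/lam := by ring
    have hpt : 0 < (κ-1)*t + 1/lam := hposd t ⟨ht, le_refl t⟩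
    have hkey : (κ-1) * ((κ-1)⁻¹ * Real.log ((κ-1)*t + 1/lam) - (κ-1)⁻¹ * Real.log ((κ-1)*0 + 1/lam))
        = Real.log ((κ-1)*t + 1/lam) - Real.log (1/lam) := by
      rw [h0]; field_simp
    rw [hkey, Real.exp_sub, Real.exp_log hpt, Real.exp_log (by positivity)]
    field_simp
    have hX : ((κ-1)*t*lam + 1) ≠ 0 := by
      have hXe : (κ-1)*t*lam + 1 = lam * ((κ-1)*t + 1/lam) := by
        field_simp
      rw [hXe]; exact (mul_pos hlam hpt).ne'
    rw [div_self hX]; simp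
  · simp only [if_neg hβ] at hpos ⊢
    set a := κ - 1 with ha
    have hE : ∀ s : ℝ, Real.exp (-(κ-1)*β*s) = (Real.exp (a*β*s))⁻¹ := by
      intro s; rw [← Real.exp_neg, ha]; ring_nf
    set D : ℝ → ℝ := fun s => Real.exp (a*β*s) + β/lam - 1 with hD
    have hDeq : ∀ s, D s = β * Real.exp (a*β*s) * (1/β + (1/lam - 1/β) * Real.exp (-(κ-1)*β*s)) := by
      intro s
      rw [hE s]
      field_simp [hD]
      simp only [hD]; rw [sub_mul, add_mul, div_mul_cancel₀ _ hlam.ne']; ring_nf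
    have hdenpos : ∀ s ∈ Set.Icc (0:ℝ) t, 0 < 1/β + (1/lam - 1/β) * Real.exp (-(κ-1)*β*s) := by
      intro s hs
      have := hpos s hs
      exact inv_pos.mp this
    have hDne : ∀ s ∈ Set.Icc (0:ℝ) t, D s ≠ 0 := by
      intro s hs
      rw [hDeq s]
      exact mul_ne_zero (mul_ne_zero hβ (Real.exp_ne_zero _)) (hdenpos s hs).ne'
    have hceq : ∀ s ∈ Set.Icc (0:ℝ) t,
        (1/β + (1/lam - 1/β) * Real.exp (-(κ-1)*β*s))⁻¹ = β * Real.exp (a*β*s) / D s := by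
      intro s hs
      have h1 := (hdenpos s hs).ne'
      rw [eq_div_iff (hDne s hs), hDeq s,
        mul_comm (β * Real.exp (a*β*s)) (1/β + (1/lam - 1/β) * Real.exp (-(κ-1)*β*s)),
        ← mul_assoc, inv_mul_cancel₀ h1, one_mul]
    -- sign of D is constant (= sign of β)
    have hDsign : ∀ s ∈ Set.Icc (0:ℝ) t, 0 < D t * D s := by
      intro s hs
      have h1 := hDeq t
      have h2 := hDeq s
      rcases lt_or_gt_of_ne hβ with hneg | hposβ
      · have hDt : D t < 0 := by
          rw [h1]
          exact mul_neg_of_neg_of_pos (mul_neg_of_neg_of_pos hneg (Real.exp_pos _))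
            (hdenpos t ⟨ht, le_refl t⟩)
        have hDs : D s < 0 := by
          rw [h2]
          exact mul_neg_of_neg_of_pos (mul_neg_of_neg_of_pos hneg (Real.exp_pos _))
            (hdenpos s hs)
        exact mul_pos_of_neg_of_neg hDt hDs
      · have hDt : 0 < D t := by
          rw [h1]
          exact mul_pos (mul_pos hposβ (Real.exp_pos _)) (hdenpos t ⟨ht, le_refl t⟩)
        have hDs : 0 < D s := by
          rw [h2]
          exact mul_pos (mul_pos hposβ (Real.exp_pos _)) (hdenpos s hs)
        exact mul_pos hDt hDs
    -- antiderivative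
    have hderiv : ∀ s ∈ Set.uIcc (0:ℝ) t,
        HasDerivAt (fun s => a⁻¹ * Real.log (D s))
          ((1/β + (1/lam - 1/β) * Real.exp (-(κ-1)*β*s))⁻¹) s := by
      intro s hs
      rw [Set.uIcc_of_le ht] at hs
      have hne : D s ≠ 0 := hDne s hs
      have h1 : HasDerivAt D (Real.exp (a*β*s) * (a*β)) s := by
        rw [hD]
        have h0 : HasDerivAt (fun x : ℝ => a*β*x) (a*β) s := by
          simpa using (hasDerivAt_id s).const_mul (a*β)
        simpa [← add_sub_assoc] using h0.exp.add_const (β/lam - 1)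
      have h2 := (h1.log hne).const_mul (a⁻¹)
      rw [hceq s hs]
      refine h2.congr_deriv ?_
      field_simp
    have hcont : IntervalIntegrable
        (fun s => (1/β + (1/lam - 1/β) * Real.exp (-(κ-1)*β*s))⁻¹) MeasureTheory.volume 0 t := by
      apply ContinuousOn.intervalIntegrable
      rw [Set.uIcc_of_le ht]
      apply ContinuousOn.inv₀
      · exact (continuous_const.add (continuous_const.mul
          ((continuous_const.mul continuous_id).rexp))).continuousOn
      · exact fun s hs => (hdenpos s hs).ne'
    have hint := intervalIntegral.integral_eq_sub_of_hasDerivAt hderiv hcont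
    rw [hint]
    have hkey : a * (a⁻¹ * Real.log (D t) - a⁻¹ * Real.log (D 0))
        = Real.log (D t) - Real.log (D 0) := by field_simp
    rw [hkey]
    have hDt := hDne t ⟨ht, le_refl t⟩
    have hD0 := hDne 0 ⟨le_refl 0, ht⟩
    have hexp : Real.exp (Real.log (D t) - Real.log (D 0)) = D t / D 0 := by
      rw [Real.exp_sub, ← Real.log_abs (D t), ← Real.log_abs (D 0),
        Real.exp_log (abs_pos.mpr hDt), Real.exp_log (abs_pos.mpr hD0), ← abs_div,
        abs_of_pos]
      exact div_pos_iff.mpr (by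
        rcases mul_pos_iff.mp (hDsign 0 ⟨le_refl 0, ht⟩) with ⟨h1, h2⟩ | ⟨h1, h2⟩
        · exact Or.inl ⟨h1, h2⟩
        · exact Or.inr ⟨h1, h2⟩)
    rw [hexp, hceq t ⟨ht, le_refl t⟩]
    have hD0val : D 0 = β / lam := by simp [hD]
    rw [hD0val]
    have hβlam : β / lam ≠ 0 := div_ne_zero hβ hlam.ne'
    field_simp
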